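/- For a rectangular region A = [-a/2, a/2] × [-b/2, b/2] with a, b > 0 and D = √(a² + b²), the mean distance to the center satisfies (1/(ab)) ∫_A ‖q‖ dA = (a²/(12b)) · log((D + b)/a) − (b²/(12a)) · log((D − a)/b) + D/6. -/

import Mathlib

open MeasureTheory

open MeasureTheory Real Filter intervalIntegral

noncomputable def rmdS (c x : ℝ) : ℝ := Real.sqrt (x ^ 2 + c ^ 2)
lemma rmdS_pos {c : ℝ} (hc : 0 < c) (x : ℝ) : 0 < rmdS c x := by
  apply Real.sqrt_pos.2; positivity
lemma rmdS_sq (c x : ℝ) : rmdS c x ^ 2 = x ^ 2 + c ^ 2 := Real.sq_sqrt (by positivity)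
lemma rmdS_gt {c : ℝ} (hc : 0 < c) {x : ℝ} : |x| < rmdS c x := by
  rw [← Real.sqrt_sq_eq_abs]
  apply Real.sqrt_lt_sqrt (by positivity); nlinarith
lemma rmdS_ge (c x : ℝ) : |x| ≤ rmdS c x := by
  rw [← Real.sqrt_sq_eq_abs]
  exact Real.sqrt_le_sqrt (by nlinarith [sq_nonneg c])
lemma rmdS_gt' {c : ℝ} (hc : 0 ≤ c) {x : ℝ} (hx : x ≠ 0) : c < rmdS c x := by
  have hx2 : 0 < x ^ 2 := by positivity
  calc c = Real.sqrt (c ^ 2) := (Real.sqrt_sq hc).symm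
  _ < _ := Real.sqrt_lt_sqrt (by positivity) (by nlinarith)
lemma rmdS_ge' {c : ℝ} (hc : 0 ≤ c) (x : ℝ) : c ≤ rmdS c x := by
  calc c = Real.sqrt (c ^ 2) := (Real.sqrt_sq hc).symm
  _ ≤ _ := Real.sqrt_le_sqrt (by nlinarith [sq_nonneg x])
lemma rmdS_pos' {c : ℝ} (hc : c ≠ 0) (x : ℝ) : 0 < rmdS c x := by
  apply Real.sqrt_pos.2; positivity
lemma hasDerivAt_rmdS (c : ℝ) {x : ℝ} (h : x ^ 2 + c ^ 2 ≠ 0) :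
    HasDerivAt (rmdS c) (x / rmdS c x) x := by
  have h1 : HasDerivAt (fun x : ℝ => x ^ 2 + c ^ 2) (2 * x) x := by
    simpa using (hasDerivAt_pow 2 x).add_const (c ^ 2)
  have := (Real.hasDerivAt_sqrt h).comp x h1
  refine this.congr_deriv (Eq.symm ?_)
  unfold rmdS; field_simp

noncomputable def rmdK (x y : ℝ) : ℝ :=
  y * rmdS x y / 2 + x ^ 2 / 2 * Real.log (y + rmdS x y)

lemma hasDerivAt_rmdK {x : ℝ} (hx : x ≠ 0) (y : ℝ) :
    HasDerivAt (rmdK x) (rmdS x y) y := by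
  have hx2 : (0:ℝ) < x ^ 2 := by positivity
  have hs : 0 < rmdS x y := rmdS_pos' hx y
  have hys : 0 < y + rmdS x y := by
    have := rmdS_gt (c := x) (x := y) -- wrong orientation
    have h2 : |y| < rmdS x y := by
      rw [← Real.sqrt_sq_eq_abs]
      apply Real.sqrt_lt_sqrt (by positivity)
      nlinarith [sq_nonneg x, sq_abs x, (abs_pos.2 hx)]
    cases abs_lt.1 h2 with
    | intro h h' => linarith
  have hds := hasDerivAt_rmdS x (x := y) (by positivity)
  have h1 : HasDerivAt (fun y => y * rmdS x y / 2)
      ((rmdS x y + y * (y / rmdS x y)) / 2) y := by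
    simpa using ((hasDerivAt_id y).mul hds).div_const 2
  have h2 : HasDerivAt (fun y => x ^ 2 / 2 * Real.log (y + rmdS x y))
      (x ^ 2 / 2 * ((1 + y / rmdS x y) / (y + rmdS x y))) y := by
    have hin : HasDerivAt (fun y => y + rmdS x y) (1 + y / rmdS x y) y := by
      exact (hasDerivAt_id y).add hds
    have := ((Real.hasDerivAt_log hys.ne').comp y hin).const_mul (x ^ 2 / 2)
    simpa [Function.comp, div_eq_inv_mul, mul_comm] using this
  have hsum := h1.add h2
  refine hsum.congr_deriv (Eq.symm ?_)
  have hsq := rmdS_sq x y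
  have e1 : (1 + y / rmdS x y) / (y + rmdS x y) = 1 / rmdS x y := by
    field_simp; ring
  rw [e1]
  field_simp
  linear_combination hsq

lemma rmd_abs_int {c : ℝ} (hc : 0 < c) : ∫ y in (-c)..c, |y| = c ^ 2 := by
  rw [← intervalIntegral.integral_add_adjacent_intervals (a := -c) (b := 0) (c := c)
      (continuous_abs.intervalIntegrable _ _) (continuous_abs.intervalIntegrable _ _)]
  have A : ∫ y in (-c : ℝ)..0, |y| = ∫ y in (-c : ℝ)..0, -y := by
    apply intervalIntegral.integral_congr
    intro y hy
    rw [Set.uIcc_of_le (by linarith : -c ≤ (0:ℝ))] at hy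
    exact abs_of_nonpos hy.2
  have B : ∫ y in (0 : ℝ)..c, |y| = ∫ y in (0 : ℝ)..c, y := by
    apply intervalIntegral.integral_congr
    intro y hy
    rw [Set.uIcc_of_le hc.le] at hy
    exact abs_of_nonneg hy.1
  rw [A, B, intervalIntegral.integral_neg, integral_id, integral_id]
  ring

lemma rmd_inner (x : ℝ) {c : ℝ} (hc : 0 < c) :
    ∫ y in (-c)..c, Real.sqrt (x ^ 2 + y ^ 2) = rmdK x c - rmdK x (-c) := by
  rcases eq_or_ne x 0 with rfl | hx
  · have hL : ∀ y : ℝ, Real.sqrt ((0:ℝ) ^ 2 + y ^ 2) = |y| := by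
      intro y; simp [Real.sqrt_sq_eq_abs]
    simp only [hL]
    rw [rmd_abs_int hc]
    have hs1 : rmdS 0 c = c := by
      simp [rmdS, Real.sqrt_sq hc.le]
    have hs2 : rmdS 0 (-c) = c := by
      simp [rmdS, Real.sqrt_sq hc.le]
    simp [rmdK, hs1, hs2]
    ring
  · have key : ∀ y : ℝ, Real.sqrt (x ^ 2 + y ^ 2) = rmdS x y := by
      intro y; simp [rmdS, add_comm]
    simp only [key]
    exact intervalIntegral.integral_eq_sub_of_hasDerivAt
      (fun y _ => hasDerivAt_rmdK hx y)
      (((Real.continuous_sqrt.comp (by continuity)).intervalIntegrable _ _))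

noncomputable def rmdg (c x : ℝ) : ℝ :=
  c * rmdS c x + x ^ 2 / 2 * (Real.log (rmdS c x + c) - Real.log (rmdS c x - c))

noncomputable def rmdG (c x : ℝ) : ℝ :=
  2 * c * x * rmdS c x / 3
    + x ^ 3 / 6 * (Real.log (rmdS c x + c) - Real.log (rmdS c x - c))
    + c ^ 3 / 3 * Real.log (x + rmdS c x)

lemma rmdK_sub (c x : ℝ) : rmdK x c - rmdK x (-c) = rmdg c x := by
  have h1 : rmdS x c = rmdS c x := by simp [rmdS, add_comm]
  have h2 : rmdS x (-c) = rmdS c x := by simp [rmdS, add_comm]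
  simp only [rmdK, rmdg, h1, h2]
  rw [show c + rmdS c x = rmdS c x + c from add_comm _ _,
      show -c + rmdS c x = rmdS c x - c by ring]
  ring

lemma rmd_sub_eq {c : ℝ} (hc : 0 < c) {x : ℝ} (hx : x ≠ 0) :
    rmdS c x - c = x ^ 2 / (rmdS c x + c) := by
  have hs := rmdS_gt' hc.le hx
  rw [eq_div_iff (by nlinarith : rmdS c x + c ≠ 0)]
  linear_combination rmdS_sq c x

lemma rmd_tendsto {c : ℝ} (hc : 0 < c) :
    Filter.Tendsto (fun x : ℝ => x ^ 2 * Real.log (rmdS c x - c)) (nhdsWithin 0 {(0:ℝ)}ᶜ) (nhds 0) := by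
  have habs : Filter.Tendsto (fun x : ℝ => |x|) (nhdsWithin 0 {(0:ℝ)}ᶜ) (nhdsWithin 0 (Set.Ioi 0)) := by
    rw [tendsto_nhdsWithin_iff]
    constructor
    · have h0 : Filter.Tendsto (fun x : ℝ => |x|) (nhds 0) (nhds 0) := by
        simpa using continuous_abs.tendsto (0:ℝ)
      exact h0.mono_left nhdsWithin_le_nhds
    · exact eventually_mem_nhdsWithin.mono (fun x (hx : x ≠ 0) => abs_pos.2 hx)
  have hlog : Filter.Tendsto (fun x : ℝ => x ^ 2 * Real.log |x|) (nhdsWithin 0 {(0:ℝ)}ᶜ) (nhds 0) := by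
    have h0 := (tendsto_log_mul_rpow_nhdsGT_zero (r := 2) two_pos).comp habs
    refine h0.congr fun x => ?_
    show Real.log |x| * |x| ^ (2:ℝ) = x ^ 2 * Real.log |x|
    rw [Real.rpow_two, sq_abs]; ring
  have hsc : Filter.Tendsto (fun x : ℝ => x ^ 2 * Real.log (rmdS c x + c))
      (nhdsWithin 0 {(0:ℝ)}ᶜ) (nhds 0) := by
    have hcs : Continuous fun x : ℝ => rmdS c x + c := by
      unfold rmdS; continuity
    have h2c : rmdS c 0 + c = 2 * c := by
      simp [rmdS, Real.sqrt_sq hc.le]; ring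
    have hlogc : Filter.Tendsto (fun x : ℝ => Real.log (rmdS c x + c)) (nhds 0)
        (nhds (Real.log (2 * c))) := by
      rw [← h2c]
      exact (Real.continuousAt_log (by rw [h2c]; positivity)).tendsto.comp (hcs.tendsto 0)
    have := ((continuous_pow 2).tendsto 0).mul hlogc
    simpa using this.mono_left nhdsWithin_le_nhds
  have heq : ∀ x ∈ ({(0:ℝ)}ᶜ : Set ℝ), x ^ 2 * Real.log (rmdS c x - c)
      = 2 * (x ^ 2 * Real.log |x|) - x ^ 2 * Real.log (rmdS c x + c) := by
    intro x hx
    have hx0 : x ≠ 0 := hx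
    have hs := rmdS_gt' hc.le hx0
    have hs0 : rmdS c x + c ≠ 0 := by nlinarith
    rw [rmd_sub_eq hc hx0, Real.log_div (pow_ne_zero 2 hx0) hs0,
        show (x:ℝ) ^ 2 = |x| ^ 2 from (sq_abs x).symm, Real.log_pow]
    push_cast
    ring
  have := (hlog.const_mul 2).sub hsc
  simp only [mul_zero, sub_zero] at this
  apply this.congr'
  filter_upwards [self_mem_nhdsWithin] with x hx
  exact (heq x hx).symm

lemma rmdS_cont (c : ℝ) : Continuous (rmdS c) := by
  unfold rmdS; fun_prop

lemma rmdS_zero {c : ℝ} (hc : 0 < c) : rmdS c 0 = c := by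
  simp [rmdS, Real.sqrt_sq hc.le]

lemma rmdg_cont {c : ℝ} (hc : 0 < c) : Continuous (rmdg c) := by
  have hrw : rmdg c = fun x =>
      (c * rmdS c x + x ^ 2 / 2 * Real.log (rmdS c x + c))
        - x ^ 2 / 2 * Real.log (rmdS c x - c) := by
    funext x; unfold rmdg; ring
  rw [continuous_iff_continuousAt]
  intro x
  rcases eq_or_ne x 0 with rfl | hx
  · have h1 : ContinuousAt (fun x => c * rmdS c x + x ^ 2 / 2 * Real.log (rmdS c x + c)) 0 := by
      apply ContinuousAt.add
      · exact ((rmdS_cont c).continuousAt).const_mul c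
      · apply ContinuousAt.mul
        · fun_prop
        · apply ContinuousAt.log (((rmdS_cont c).continuousAt).add continuousAt_const)
          show rmdS c 0 + c ≠ 0
          rw [rmdS_zero hc]; positivity
    have h2 : Filter.Tendsto (fun x : ℝ => x ^ 2 / 2 * Real.log (rmdS c x - c)) (nhds 0)
        (nhds 0) := by
      nth_rewrite 1 [← nhdsNE_sup_pure (0:ℝ)]
      rw [Filter.tendsto_sup]
      constructor
      · have h0 := (rmd_tendsto hc).div_const 2
        rw [zero_div] at h0
        refine h0.congr fun y => ?_
        ring
      · rw [Filter.tendsto_pure_left]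
        intro s hs
        simpa using mem_of_mem_nhds hs
    have h2' : ContinuousAt (fun x : ℝ => x ^ 2 / 2 * Real.log (rmdS c x - c)) 0 := by
      unfold ContinuousAt
      convert h2 using 2
      norm_num
    rw [hrw]
    exact h1.sub h2'
  · have hs := rmdS_gt' hc.le hx
    rw [hrw]
    apply ContinuousAt.sub
    · apply ContinuousAt.add
      · exact ((rmdS_cont c).continuousAt).const_mul c
      · apply ContinuousAt.mul
        · fun_prop
        · exact ContinuousAt.log (((rmdS_cont c).continuousAt).add continuousAt_const)
            (by nlinarith)
    · apply ContinuousAt.mul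
      · fun_prop
      · exact ContinuousAt.log (((rmdS_cont c).continuousAt).sub continuousAt_const)
          (by nlinarith)

lemma rmdG_deriv {c : ℝ} (hc : 0 < c) (x : ℝ) : HasDerivAt (rmdG c) (rmdg c x) x := by
  have hGrw : rmdG c = fun x =>
      2 * c * x * rmdS c x / 3
        + (x ^ 3 / 6 * Real.log (rmdS c x + c) - x ^ 3 / 6 * Real.log (rmdS c x - c))
        + c ^ 3 / 3 * Real.log (x + rmdS c x) := by
    funext x; unfold rmdG; ring
  have hne : x ^ 2 + c ^ 2 ≠ 0 := by positivity
  have hs0 : 0 < rmdS c x := rmdS_pos hc x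
  have hxs : |x| < rmdS c x := rmdS_gt hc
  have hxs' : 0 < x + rmdS c x := by
    rcases abs_lt.1 hxs with ⟨h1, h2⟩; linarith
  have hsc : 0 < rmdS c x + c := by linarith
  have hds : HasDerivAt (rmdS c) (x / rmdS c x) x := hasDerivAt_rmdS c hne
  have f1 : HasDerivAt (fun y : ℝ => 2 * c * y * rmdS c y / 3)
      ((2 * c * 1 * rmdS c x + 2 * c * x * (x / rmdS c x)) / 3) x := by
    have h := (((hasDerivAt_id x).const_mul (2 * c)).mul hds).div_const 3
    simpa using h
  have f2 : HasDerivAt (fun y : ℝ => y ^ 3 / 6 * Real.log (rmdS c y + c))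
      (3 * x ^ 2 / 6 * Real.log (rmdS c x + c)
        + x ^ 3 / 6 * ((x / rmdS c x) / (rmdS c x + c))) x := by
    have hin : HasDerivAt (fun y : ℝ => rmdS c y + c) (x / rmdS c x) x := by
      simpa using hds.add_const c
    have hlog := (Real.hasDerivAt_log hsc.ne').comp x hin
    have h := ((hasDerivAt_pow 3 x).div_const 6).mul hlog
    refine h.congr_deriv (Eq.symm ?_)
    simp only [Function.comp]
    push_cast
    ring
  have f4 : HasDerivAt (fun y : ℝ => c ^ 3 / 3 * Real.log (y + rmdS c y))
      (c ^ 3 / 3 * ((1 + x / rmdS c x) / (x + rmdS c x))) x := by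
    have hin : HasDerivAt (fun y : ℝ => y + rmdS c y) (1 + x / rmdS c x) x := by
      exact (hasDerivAt_id x).add hds
    have hlog := (Real.hasDerivAt_log hxs'.ne').comp x hin
    have h := hlog.const_mul (c ^ 3 / 3)
    refine h.congr_deriv (Eq.symm ?_)
    ring
  rcases eq_or_ne x 0 with rfl | hx
  · -- x = 0 : the singular term
    have f3 : HasDerivAt (fun y : ℝ => y ^ 3 / 6 * Real.log (rmdS c y - c)) 0 0 := by
      rw [hasDerivAt_iff_tendsto_slope]
      have h0 := (rmd_tendsto hc).div_const 6
      rw [zero_div] at h0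
      refine h0.congr' ?_
      filter_upwards [self_mem_nhdsWithin] with y (hy : y ≠ 0)
      rw [slope_def_field]
      field_simp
      ring
    rw [hGrw]
    have h := (f1.add (f2.sub f3)).add f4
    refine h.congr_deriv (Eq.symm ?_)
    rw [rmdS_zero hc]
    unfold rmdg
    rw [rmdS_zero hc]
    field_simp
    ring
  · have hsc' : 0 < rmdS c x - c := by
      have := rmdS_gt' hc.le hx; linarith
    have f3 : HasDerivAt (fun y : ℝ => y ^ 3 / 6 * Real.log (rmdS c y - c))
        (3 * x ^ 2 / 6 * Real.log (rmdS c x - c)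
          + x ^ 3 / 6 * ((x / rmdS c x) / (rmdS c x - c))) x := by
      have hin : HasDerivAt (fun y : ℝ => rmdS c y - c) (x / rmdS c x) x := by
        simpa using hds.sub_const c
      have hlog := (Real.hasDerivAt_log hsc'.ne').comp x hin
      have h := ((hasDerivAt_pow 3 x).div_const 6).mul hlog
      refine h.congr_deriv (Eq.symm ?_)
      simp only [Function.comp]
      push_cast
      ring
    rw [hGrw]
    have h := (f1.add (f2.sub f3)).add f4
    refine h.congr_deriv (Eq.symm ?_)
    unfold rmdg
    have hsq := rmdS_sq c x
    set s := rmdS c x with hsdef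
    have hs' : s ≠ 0 := hs0.ne'
    have hsc2 : s + c ≠ 0 := hsc.ne'
    have hsc2' : s - c ≠ 0 := hsc'.ne'
    have hxs2 : x + s ≠ 0 := hxs'.ne'
    have e1 : (1 + x/s)/(x+s) = 1/s := by field_simp; ring
    have t2 : x^3/6*(x/s/(s+c)) - x^3/6*(x/s/(s-c)) = -(c*x^2)/(3*s) := by
      field_simp
      ring_nf
      linear_combination (6*c) * hsq
    have t3 : (2*c*1*s + 2*c*x*(x/s))/3 + c^3/3*(1/s) = c*s + c*x^2/(3*s) := by
      field_simp
      ring_nf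
      linear_combination -hsq
    rw [e1]
    linear_combination -t2 - t3

theorem rect_mean_dist (a b : ℝ) (ha : 0 < a) (hb : 0 < b) (D : ℝ)
    (hD : D = Real.sqrt (a ^ 2 + b ^ 2)) :
    (1 / (a * b)) * ∫ q in (Set.Icc (-(a/2)) (a/2)) ×ˢ (Set.Icc (-(b/2)) (b/2)),
      Real.sqrt (q.1 ^ 2 + q.2 ^ 2)
    = (a ^ 2 / (12 * b)) * Real.log ((D + b) / a)
      - (b ^ 2 / (12 * a)) * Real.log ((D - a) / b) + D / 6 := by
  have hb2 : 0 < b / 2 := by linarith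
  have ha2 : 0 < a / 2 := by linarith
  have hD0 : 0 < D := by rw [hD]; positivity
  have hDD : D ^ 2 = a ^ 2 + b ^ 2 := by rw [hD]; exact Real.sq_sqrt (by positivity)
  have hDa : a < D := by nlinarith
  have hDb : b < D := by nlinarith
  -- Fubini
  have hcont : Continuous fun q : ℝ × ℝ => Real.sqrt (q.1 ^ 2 + q.2 ^ 2) :=
    Real.continuous_sqrt.comp (by fun_prop)
  have hInt : IntegrableOn (fun q : ℝ × ℝ => Real.sqrt (q.1 ^ 2 + q.2 ^ 2))
      ((Set.Icc (-(a/2)) (a/2)) ×ˢ (Set.Icc (-(b/2)) (b/2)))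
      ((volume : Measure ℝ).prod volume) := by
    rw [← Measure.volume_eq_prod]
    exact hcont.continuousOn.integrableOn_compact (isCompact_Icc.prod isCompact_Icc)
  have hfub : (∫ q in (Set.Icc (-(a/2)) (a/2)) ×ˢ (Set.Icc (-(b/2)) (b/2)),
      Real.sqrt (q.1 ^ 2 + q.2 ^ 2))
      = ∫ x in Set.Icc (-(a/2)) (a/2), ∫ y in Set.Icc (-(b/2)) (b/2),
          Real.sqrt (x ^ 2 + y ^ 2) := by
    rw [Measure.volume_eq_prod]
    exact setIntegral_prod _ hInt
  have inner_eq : ∀ x : ℝ, (∫ y in Set.Icc (-(b/2)) (b/2), Real.sqrt (x ^ 2 + y ^ 2))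
      = rmdg (b/2) x := by
    intro x
    rw [integral_Icc_eq_integral_Ioc, ← intervalIntegral.integral_of_le (by linarith),
      rmd_inner x hb2, rmdK_sub]
  have houter : (∫ x in Set.Icc (-(a/2)) (a/2), rmdg (b/2) x)
      = rmdG (b/2) (a/2) - rmdG (b/2) (-(a/2)) := by
    rw [integral_Icc_eq_integral_Ioc, ← intervalIntegral.integral_of_le (by linarith)]
    exact intervalIntegral.integral_eq_sub_of_hasDerivAt
      (fun x _ => rmdG_deriv hb2 x) ((rmdg_cont hb2).intervalIntegrable _ _)
  rw [hfub]
  simp only [inner_eq]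
  rw [houter]
  -- evaluate
  have hD2 : rmdS (b/2) (a/2) = D / 2 := by
    unfold rmdS
    rw [show (a/2) ^ 2 + (b/2) ^ 2 = (a ^ 2 + b ^ 2) * (1/2) ^ 2 by ring,
      Real.sqrt_mul (by positivity), Real.sqrt_sq (by norm_num), hD]
    ring
  have hD2' : rmdS (b/2) (-(a/2)) = D / 2 := by
    unfold rmdS
    rw [show (-(a/2)) ^ 2 + (b/2) ^ 2 = (a ^ 2 + b ^ 2) * (1/2) ^ 2 by ring,
      Real.sqrt_mul (by positivity), Real.sqrt_sq (by norm_num), hD]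
    ring
  have l1 : Real.log (D/2 + b/2) - Real.log (D/2 - b/2) = 2 * Real.log ((D + b) / a) := by
    have e2 : Real.log (D - b) = 2 * Real.log a - Real.log (D + b) := by
      have h1 : D - b = a ^ 2 / (D + b) := by
        rw [eq_div_iff (by positivity)]; linear_combination hDD
      rw [h1, Real.log_div (by positivity) (by positivity), Real.log_pow]
      push_cast; ring
    rw [show D/2 + b/2 = (D+b)/2 by ring, show D/2 - b/2 = (D-b)/2 by ring,
      Real.log_div (by positivity) two_ne_zero,
      Real.log_div (by nlinarith : D - b ≠ 0) two_ne_zero,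
      Real.log_div (by positivity) ha.ne']
    linarith [e2]
  have l2 : Real.log (a/2 + D/2) - Real.log (-(a/2) + D/2)
      = -2 * Real.log ((D - a) / b) := by
    have e2 : Real.log (D + a) = 2 * Real.log b - Real.log (D - a) := by
      have h1 : D + a = b ^ 2 / (D - a) := by
        rw [eq_div_iff (by nlinarith : D - a ≠ 0)]; linear_combination hDD
      rw [h1, Real.log_div (by positivity) (by nlinarith : D - a ≠ 0), Real.log_pow]
      push_cast; ring
    rw [show a/2 + D/2 = (D+a)/2 by ring, show -(a/2) + D/2 = (D-a)/2 by ring,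
      Real.log_div (by positivity) two_ne_zero,
      Real.log_div (by nlinarith : D - a ≠ 0) two_ne_zero,
      Real.log_div (by nlinarith : D - a ≠ 0) hb.ne']
    linarith [e2]
  unfold rmdG
  rw [hD2, hD2']
  set A1 := Real.log (D/2 + b/2) with hA1
  set A2 := Real.log (D/2 - b/2) with hA2
  set A3 := Real.log (a/2 + D/2) with hA3
  set A4 := Real.log (-(a/2) + D/2) with hA4
  set LB := Real.log ((D + b) / a) with hLB
  set LA := Real.log ((D - a) / b) with hLA
  field_simp
  linear_combination (72*a^3) * l1 + (72*b^3) * l2
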